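/- Monotonicity in the discrepancy principle: let Q be a bounded, self-adjoint, non-negative operator on a Hilbert space H with ‖Q‖ ≤ 1 and let g ∈ H, g ≠ 0. Then the function I(α) = α²‖(Q + αI)^{-1} g‖² is monotone increasing on (0, ∞), with lim_{α→∞} I(α) = ‖g‖² and lim_{α→0⁺} I(α) = ‖P_{N(Q)} g‖², where P_{N(Q)} is the orthogonal projection onto the null-space of Q. -/

import Mathlib

open scoped RealInnerProductSpace Topology

theorem stmt_12 {H : Type*} [NormedAddCommGroup H] [InnerProductSpace ℝ H]
    [CompleteSpace H] (Q : H →L[ℝ] H) (hsa : IsSelfAdjoint Q)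
    (hnn : ∀ u : H, 0 ≤ ⟪Q u, u⟫) (hQ : ‖Q‖ ≤ 1)
    (g : H) (hg : g ≠ 0)
    (R : ℝ → (H →L[ℝ] H))
    (hR : ∀ a > (0:ℝ), (Q + a • (1 : H →L[ℝ] H)) ∘L R a = 1 ∧
      R a ∘L (Q + a • (1 : H →L[ℝ] H)) = 1)
    (Pg : H)  -- Pg = orthogonal projection of g onto N(Q)
    (hPg1 : Q Pg = 0) (hPg2 : ∀ z : H, Q z = 0 → ⟪g - Pg, z⟫ = 0) :
    MonotoneOn (fun a : ℝ => a ^ 2 * ‖R a g‖ ^ 2) (Set.Ioi 0) ∧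
    Filter.Tendsto (fun a : ℝ => a ^ 2 * ‖R a g‖ ^ 2) Filter.atTop (𝓝 (‖g‖ ^ 2)) ∧
    Filter.Tendsto (fun a : ℝ => a ^ 2 * ‖R a g‖ ^ 2) (𝓝[>] 0) (𝓝 (‖Pg‖ ^ 2)) := by
  -- pointwise inverse identities
  have happ1 : ∀ a > (0:ℝ), ∀ x : H, Q (R a x) + a • (R a x) = x := by
    intro a ha x
    have := congrArg (fun T : H →L[ℝ] H => T x) (hR a ha).1
    simpa [ContinuousLinearMap.comp_apply, ContinuousLinearMap.add_apply,
      ContinuousLinearMap.smul_apply, ContinuousLinearMap.one_apply] using this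
  have happ2 : ∀ a > (0:ℝ), ∀ x : H, R a (Q x + a • x) = x := by
    intro a ha x
    have := congrArg (fun T : H →L[ℝ] H => T x) (hR a ha).2
    simpa [ContinuousLinearMap.comp_apply, ContinuousLinearMap.add_apply,
      ContinuousLinearMap.smul_apply, ContinuousLinearMap.one_apply] using this
  -- commutation
  have hcomm : ∀ a > (0:ℝ), ∀ x : H, R a (Q x) = Q (R a x) := by
    intro a ha x
    have h2 : Q (Q (R a x)) + a • Q (R a x) = Q x := by
      rw [← map_smul, ← map_add, happ1 a ha x]
    calc R a (Q x) = R a (Q (Q (R a x)) + a • Q (R a x)) := by rw [h2]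
      _ = Q (R a x) := happ2 a ha _
  -- norm bound
  have hnorm : ∀ a > (0:ℝ), ∀ x : H, a * ‖R a x‖ ≤ ‖x‖ := by
    intro a ha x
    set y := R a x with hy
    have h3 : ⟪Q y, y⟫ + a * ⟪y, y⟫ = ⟪x, y⟫ := by
      have h2 : ⟪Q y + a • y, y⟫ = ⟪x, y⟫ := by rw [happ1 a ha x]
      rw [← h2]; simp [inner_add_left, real_inner_smul_left]
    have h4 := hnn y
    have h5 : ⟪x, y⟫ ≤ ‖x‖ * ‖y‖ := real_inner_le_norm x y
    have h6 : ⟪y, y⟫ = ‖y‖ ^ 2 := real_inner_self_eq_norm_sq y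
    have h1 : a * ‖y‖ ^ 2 ≤ ‖x‖ * ‖y‖ := by nlinarith
    by_cases hy0 : ‖y‖ = 0
    · rw [hy0, mul_zero]; exact norm_nonneg x
    · have hy' : 0 < ‖y‖ := lt_of_le_of_ne (norm_nonneg y) (Ne.symm hy0)
      nlinarith
  -- symmetry of Q
  have hsym : ∀ x y : H, ⟪Q x, y⟫ = ⟪x, Q y⟫ := fun x y =>
    (ContinuousLinearMap.isSelfAdjoint_iff_isSymmetric.mp hsa) x y
  -- Part 1: monotonicity
  have mono : MonotoneOn (fun a : ℝ => a ^ 2 * ‖R a g‖ ^ 2) (Set.Ioi 0) := by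
    rintro a (ha : (0:ℝ) < a) b (hb : (0:ℝ) < b) hab
    dsimp only
    set u := R a g with hu0
    set v := R b g with hv0
    set p := R a v with hp0
    have hu : Q u + a • u = g := happ1 a ha g
    have hv : Q v + b • v = g := happ1 b hb g
    have hp : Q p + a • p = v := happ1 a ha v
    have hup : u = Q p + b • p := by
      have h1 : u = R a (Q v + b • v) := by rw [hv]
      rw [h1, map_add, map_smul, hcomm a ha v]
    have hw : u - v = (b - a) • p := by
      rw [hup, ← hp]; module
    have hQw : Q (u - v) = b • v - a • u := by
      rw [map_sub]
      have : Q u + a • u = Q v + b • v := by rw [hu, hv]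
      have h : Q u + a • u = Q v + b • v := by rw [hu, hv]
      rw [sub_eq_sub_iff_add_eq_add, h, add_comm]
    have main : b ^ 2 * ‖v‖ ^ 2 - a ^ 2 * ‖u‖ ^ 2
        = 2 * a * ⟪Q (u - v), u⟫ + ⟪Q (u - v), Q (u - v)⟫ := by
      rw [hQw, ← real_inner_self_eq_norm_sq, ← real_inner_self_eq_norm_sq]
      simp only [inner_sub_left, inner_sub_right, real_inner_smul_left, real_inner_smul_right]
      rw [real_inner_comm v u]
      ring
    have h2 : ⟪Q (u - v), u⟫ = (b - a) * (⟪Q p, Q p⟫ + b * ⟪Q p, p⟫) := by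
      rw [hw, map_smul, real_inner_smul_left]
      rw [hup, inner_add_right, real_inner_smul_right]
    have hA : (0:ℝ) ≤ ⟪Q p, Q p⟫ := real_inner_self_nonneg
    have hB : (0:ℝ) ≤ ⟪Q p, p⟫ := by
      have := hnn p; rwa [real_inner_comm] at this ⊢
    have hC : (0:ℝ) ≤ ⟪Q (u - v), Q (u - v)⟫ := real_inner_self_nonneg
    have hD : (0:ℝ) ≤ (b - a) * (⟪Q p, Q p⟫ + b * ⟪Q p, p⟫) :=
      mul_nonneg (by linarith) (add_nonneg hA (mul_nonneg hb.le hB))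
    have h3 : b ^ 2 * ‖v‖ ^ 2 - a ^ 2 * ‖u‖ ^ 2
        = 2 * a * ((b - a) * (⟪Q p, Q p⟫ + b * ⟪Q p, p⟫)) + ⟪Q (u - v), Q (u - v)⟫ := by
      rw [main, h2]
    have hE : (0:ℝ) ≤ 2 * a * ((b - a) * (⟪Q p, Q p⟫ + b * ⟪Q p, p⟫)) :=
      mul_nonneg (by linarith) hD
    linarith
  refine ⟨mono, ?_, ?_⟩
  -- Part 2: limit at infinity
  · have key : Filter.Tendsto (fun a : ℝ => a • R a g) Filter.atTop (𝓝 g) := by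
      rw [tendsto_iff_norm_sub_tendsto_zero]
      apply squeeze_zero' (Filter.Eventually.of_forall fun a => norm_nonneg _)
        (g := fun a : ℝ => ‖Q g‖ / a)
      · filter_upwards [Filter.eventually_gt_atTop (0:ℝ)] with a ha
        have hid : a • R a g - g = -(R a (Q g)) := by
          rw [hcomm a ha g, eq_sub_of_add_eq (happ1 a ha g)]; abel
        rw [hid, norm_neg, le_div_iff₀ ha, mul_comm]
        exact hnorm a ha (Q g)
      · exact Filter.Tendsto.div_atTop tendsto_const_nhds Filter.tendsto_id
    have T2 : Filter.Tendsto (fun a : ℝ => ‖a • R a g‖ ^ 2) Filter.atTop (𝓝 (‖g‖ ^ 2)) :=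
      key.norm.pow 2
    have heq : (fun a : ℝ => ‖a • R a g‖ ^ 2) =ᶠ[Filter.atTop]
        (fun a : ℝ => a ^ 2 * ‖R a g‖ ^ 2) := by
      filter_upwards [Filter.eventually_gt_atTop (0:ℝ)] with a ha
      rw [norm_smul, Real.norm_eq_abs, abs_of_pos ha, mul_pow]
    exact Filter.Tendsto.congr' heq T2
  · -- Part 3: limit at zero
    set K : Submodule ℝ H := LinearMap.range (Q : H →ₗ[ℝ] H) with hK
    have hmem : g - Pg ∈ Kᗮᗮ := by
      rw [Submodule.mem_orthogonal]
      intro w hw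
      have hQw : Q w = 0 := by
        have h0 : ⟪Q (Q w), w⟫ = 0 := hw (Q (Q w)) ⟨Q w, rfl⟩
        have h1 : ⟪Q w, Q w⟫ = 0 := by
          calc ⟪Q w, Q w⟫ = ⟪w, Q (Q w)⟫ := hsym w (Q w)
            _ = ⟪Q (Q w), w⟫ := real_inner_comm _ _
            _ = 0 := h0
        exact inner_self_eq_zero.mp h1
      rw [real_inner_comm]
      exact hPg2 w hQw
    have hcl : g - Pg ∈ closure (K : Set H) := by
      rw [← Submodule.topologicalClosure_coe, ← Submodule.orthogonal_orthogonal_eq_closure]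
      exact hmem
    have hsplit : ∀ a > (0:ℝ), a • R a g = Pg + a • R a (g - Pg) := by
      intro a ha
      have h1 : a • R a Pg = Pg := by
        rw [← map_smul]
        have := happ2 a ha Pg
        rwa [hPg1, zero_add] at this
      calc a • R a g = a • R a (Pg + (g - Pg)) := by rw [add_sub_cancel]
        _ = a • R a Pg + a • R a (g - Pg) := by rw [map_add, smul_add]
        _ = Pg + a • R a (g - Pg) := by rw [h1]
    have key0 : Filter.Tendsto (fun a : ℝ => a • R a (g - Pg)) (𝓝[>] 0) (𝓝 0) := by
      rw [NormedAddCommGroup.tendsto_nhds_zero]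
      intro ε hε
      obtain ⟨y, hyK, hdy⟩ := Metric.mem_closure_iff.mp hcl (ε / 2) (by positivity)
      obtain ⟨z, hz⟩ := hyK
      have hdz : ‖(g - Pg) - Q z‖ < ε / 2 := by
        rw [← hz, dist_eq_norm] at hdy
        exact hdy
      set δ : ℝ := ε / (4 * (‖z‖ + 1)) with hδdef
      have hδ : 0 < δ := by positivity
      filter_upwards [Ioo_mem_nhdsGT_of_mem (Set.left_mem_Ico.2 hδ)] with a ha
      obtain ⟨ha0, haδ⟩ := ha
      have e1 : ‖a • R a ((g - Pg) - Q z)‖ ≤ ‖(g - Pg) - Q z‖ := by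
        rw [norm_smul, Real.norm_eq_abs, abs_of_pos ha0]
        exact hnorm a ha0 _
      have e2 : ‖a • R a (Q z)‖ ≤ 2 * a * ‖z‖ := by
        have hzz : R a (Q z) = z - a • R a z := by
          rw [hcomm a ha0 z, eq_sub_of_add_eq (happ1 a ha0 z)]
        rw [hzz, smul_sub]
        calc ‖a • z - a • a • R a z‖ ≤ ‖a • z‖ + ‖a • a • R a z‖ := norm_sub_le _ _
          _ = a * ‖z‖ + a * (a * ‖R a z‖) := by
              simp only [norm_smul, Real.norm_eq_abs, abs_of_pos ha0]
          _ ≤ a * ‖z‖ + a * ‖z‖ := by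
              have := hnorm a ha0 z
              have := mul_le_mul_of_nonneg_left (hnorm a ha0 z) ha0.le
              linarith
          _ = 2 * a * ‖z‖ := by ring
      have e3 : 2 * a * ‖z‖ < ε / 2 := by
        have h1 : 2 * a * ‖z‖ ≤ 2 * a * (‖z‖ + 1) := by nlinarith [norm_nonneg z]
        have h2 : 2 * δ * (‖z‖ + 1) = ε / 2 := by
          rw [hδdef]
          field_simp
          ring
        have hzp : (0:ℝ) < ‖z‖ + 1 := by positivity
        nlinarith
      calc ‖a • R a (g - Pg)‖
          = ‖a • R a ((g - Pg) - Q z) + a • R a (Q z)‖ := by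
            rw [← smul_add, ← map_add]
            congr 2
            abel
        _ ≤ ‖a • R a ((g - Pg) - Q z)‖ + ‖a • R a (Q z)‖ := norm_add_le _ _
        _ < ε / 2 + ε / 2 := by
            have := lt_of_le_of_lt e2 e3
            linarith [lt_of_le_of_lt e1 hdz]
        _ = ε := by ring
    have T0 : Filter.Tendsto (fun a : ℝ => a • R a g) (𝓝[>] 0) (𝓝 Pg) := by
      have h1 : Filter.Tendsto (fun a : ℝ => Pg + a • R a (g - Pg)) (𝓝[>] 0) (𝓝 (Pg + 0)) :=
        tendsto_const_nhds.add key0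
      rw [add_zero] at h1
      refine Filter.Tendsto.congr' ?_ h1
      filter_upwards [self_mem_nhdsWithin] with a ha
      exact (hsplit a ha).symm
    have T2 : Filter.Tendsto (fun a : ℝ => ‖a • R a g‖ ^ 2) (𝓝[>] 0) (𝓝 (‖Pg‖ ^ 2)) :=
      T0.norm.pow 2
    have heq : (fun a : ℝ => ‖a • R a g‖ ^ 2) =ᶠ[𝓝[>] (0:ℝ)]
        (fun a : ℝ => a ^ 2 * ‖R a g‖ ^ 2) := by
      filter_upwards [self_mem_nhdsWithin] with a ha
      rw [norm_smul, Real.norm_eq_abs, abs_of_pos ha, mul_pow]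
    exact Filter.Tendsto.congr' heq T2
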